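/- A polynomial over a field of characteristic zero is solvable by radicals if and only if the Galois group of its splitting field is a solvable group. -/

import Mathlib

open Polynomial IntermediateField Module

section Helpers

variable {K : Type*} [Field K]

theorem IsSolvableByRad.map_algHom {L L' : Type*} [Field L] [Field L'] [Algebra K L]
    [Algebra K L'] (f : L →ₐ[K] L') {x : L} (h : IsSolvableByRad K x) :
    IsSolvableByRad K (f x) := by
  induction h with
  | base α => rw [f.commutes]; exact IsSolvableByRad.base α
  | add α β _ _ ihα ihβ => rw [map_add]; exact IsSolvableByRad.add _ _ ihα ihβ
  | neg α _ ih => rw [map_neg]; exact IsSolvableByRad.neg _ ih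
  | mul α β _ _ ihα ihβ => rw [map_mul]; exact IsSolvableByRad.mul _ _ ihα ihβ
  | inv α _ ih => rw [map_inv₀]; exact IsSolvableByRad.inv _ ih
  | rad α n hn _ ih => exact IsSolvableByRad.rad _ n hn (by rw [← map_pow]; exact ih)

theorem IsSolvableByRad.trans_tower {M L : Type*} [Field M] [Field L] [Algebra K M]
    [Algebra M L] [Algebra K L] [IsScalarTower K M L]
    (hM : ∀ y : M, IsSolvableByRad K (algebraMap M L y)) {x : L}
    (h : IsSolvableByRad M x) : IsSolvableByRad K x := by
  induction h with
  | base α => exact hM α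
  | add α β _ _ ihα ihβ => exact IsSolvableByRad.add _ _ ihα ihβ
  | neg α _ ih => exact IsSolvableByRad.neg _ ih
  | mul α β _ _ ihα ihβ => exact IsSolvableByRad.mul _ _ ihα ihβ
  | inv α _ ih => exact IsSolvableByRad.inv _ ih
  | rad α n hn _ ih => exact IsSolvableByRad.rad _ n hn ih

theorem IsSolvableByRad.mem_solvableByRad {L : Type*} [Field L] [Algebra K L] {x : L}
    (h : IsSolvableByRad K x) : x ∈ solvableByRad K L := by
  induction h with
  | base α => exact IntermediateField.algebraMap_mem _ α
  | add α β _ _ ihα ihβ => exact add_mem ihα ihβ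
  | neg α _ ih => exact neg_mem ih
  | mul α β _ _ ihα ihβ => exact mul_mem ihα ihβ
  | inv α _ ih => exact inv_mem ih
  | rad α n hn _ ih => exact solvableByRad.rad_mem hn ih

theorem IsSolvableByRad.of_mem {L : Type*} [Field L] [Algebra K L] {x : L}
    (h : x ∈ solvableByRad K L) : IsSolvableByRad K x := by
  induction h using solvableByRad.induction with
  | mem y => exact IsSolvableByRad.base y
  | add y z _ _ hy hz => exact IsSolvableByRad.add _ _ hy hz
  | mul y z _ _ hy hz => exact IsSolvableByRad.mul _ _ hy hz
  | rad n y hn _ hy => exact IsSolvableByRad.rad _ n hn hy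

end Helpers

section GroupLemma

theorem commutator_ne_top_of_solvable (G : Type*) [Group G] [Group.IsSolvable G] [Nontrivial G] :
    commutator G ≠ ⊤ := by
  intro h
  have key : ∀ n, derivedSeries G n = ⊤ := by
    intro n
    induction n with
    | zero => exact derivedSeries_zero G
    | succ n ih => rw [derivedSeries_succ, ih, ← commutator_def, h]
  obtain ⟨n, hn⟩ := Group.IsSolvable.solvable (G := G)
  obtain ⟨g, hg⟩ := exists_ne (1 : G)
  exact hg ((Subgroup.mem_bot).mp (hn ▸ (key n ▸ Subgroup.mem_top g)))

theorem quotient_coatom_isCyclic {A : Type*} [CommGroup A] [Finite A] {H : Subgroup A}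
    (hH : H ≠ ⊤) (hmax : ∀ H' : Subgroup A, H' ≠ ⊤ → H ≤ H' → H = H') :
    IsCyclic (A ⧸ H) := by
  have hnt : Nontrivial (A ⧸ H) := by
    by_contra h
    rw [not_nontrivial_iff_subsingleton] at h
    exact hH (QuotientGroup.subgroup_eq_top_of_subsingleton H h)
  obtain ⟨x, hx⟩ := exists_ne (1 : A ⧸ H)
  refine ⟨⟨x, fun y => ?_⟩⟩
  show y ∈ Subgroup.zpowers x
  -- every subgroup of A ⧸ H is ⊥ or ⊤
  have key : ∀ S : Subgroup (A ⧸ H), S = ⊥ ∨ S = ⊤ := by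
    intro S
    have hle : H ≤ Subgroup.comap (QuotientGroup.mk' H) S := by
      intro a ha
      have : (QuotientGroup.mk' H) a = 1 := by
        rwa [← MonoidHom.mem_ker, QuotientGroup.ker_mk']
      rw [Subgroup.mem_comap, this]
      exact S.one_mem
    by_cases hS : Subgroup.comap (QuotientGroup.mk' H) S = ⊤
    · right
      have := Subgroup.map_comap_eq_self_of_surjective
        (QuotientGroup.mk'_surjective H) S
      rw [← this, hS]
      exact Subgroup.map_top_of_surjective _ (QuotientGroup.mk'_surjective H)
    · left
      have heq := hmax _ hS hle
      have := Subgroup.map_comap_eq_self_of_surjective (QuotientGroup.mk'_surjective H) S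
      rw [← this, ← heq]
      ext z
      simp only [Subgroup.mem_map, Subgroup.mem_bot]
      constructor
      · rintro ⟨a, ha, rfl⟩
        rwa [← QuotientGroup.ker_mk' H, MonoidHom.mem_ker] at ha
      · rintro rfl
        exact ⟨1, H.one_mem, map_one _⟩
  rcases key (Subgroup.zpowers x) with h | h
  · exact absurd ((Subgroup.zpowers_eq_bot).mp h) hx
  · exact h ▸ Subgroup.mem_top y

theorem exists_normal_cyclic_quotient (G : Type*) [Group G] [Finite G] [Group.IsSolvable G]
    [Nontrivial G] :
    ∃ N : Subgroup G, N.Normal ∧ N ≠ ⊤ ∧ ∀ [h : N.Normal], IsCyclic (G ⧸ N) := by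
  have hcomm := commutator_ne_top_of_solvable G
  set A := G ⧸ commutator G with hA
  have : Nontrivial A := by
    by_contra h
    rw [not_nontrivial_iff_subsingleton] at h
    exact hcomm (QuotientGroup.subgroup_eq_top_of_subsingleton _ h)
  -- A is a commutative group
  letI : CommGroup A := Abelianization.commGroup G
  -- take a maximal proper subgroup H of A
  obtain ⟨H, hH, hmax⟩ := Set.Finite.exists_maximalFor (id : Subgroup A → Subgroup A)
    {H : Subgroup A | H ≠ ⊤} (Set.toFinite _) ⟨⊥, bot_ne_top⟩
  have hmax' : ∀ H' : Subgroup A, H' ≠ ⊤ → H ≤ H' → H = H' := fun H' h1 h2 => le_antisymm h2 (hmax h1 h2)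
  have hcyc := quotient_coatom_isCyclic hH hmax'
  set f := (QuotientGroup.mk' H).comp (QuotientGroup.mk' (commutator G)) with hf
  have hfsurj : Function.Surjective f :=
    (QuotientGroup.mk'_surjective H).comp (QuotientGroup.mk'_surjective (commutator G))
  refine ⟨f.ker, inferInstance, ?_, ?_⟩
  · intro h
    have : Subsingleton (A ⧸ H) := by
      constructor
      intro a b
      obtain ⟨a, rfl⟩ := hfsurj a
      obtain ⟨b, rfl⟩ := hfsurj b
      have ha : a ∈ f.ker := h ▸ Subgroup.mem_top a
      have hb : b ∈ f.ker := h ▸ Subgroup.mem_top b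
      rw [MonoidHom.mem_ker] at ha hb
      rw [ha, hb]
    exact hH (QuotientGroup.subgroup_eq_top_of_subsingleton H this)
  · intro h
    haveI := hcyc
    exact isCyclic_of_surjective _
      (QuotientGroup.quotientKerEquivOfSurjective f hfsurj).symm.surjective

end GroupLemma
section Engine

universe u

theorem solvable_gal_radical_engine (n : ℕ) (hn : n ≠ 0) :
    ∀ m : ℕ, ∀ (K L : Type u) (_ : Field K) (_ : Field L) (_ : Algebra K L)
      (_ : FiniteDimensional K L) (_ : IsGalois K L),
      Group.IsSolvable (L ≃ₐ[K] L) → Module.finrank K L = m → m ∣ n →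
      (∃ ζ : K, IsPrimitiveRoot ζ n) → ∀ x : L, IsSolvableByRad K x := by
  intro m
  induction m using Nat.strong_induction_on with
  | _ m ih =>
    intro K L _ _ _ _ _ hsolv hm hdvd hζex x
    obtain ⟨ζ, hζ⟩ := hζex
    by_cases hm1 : m = 1
    · -- trivial extension
      have hrank1 : Module.finrank K L = 1 := by rw [hm, hm1]
      have hbot : (⊥ : Subalgebra K L) = ⊤ := Subalgebra.bot_eq_top_of_finrank_eq_one hrank1
      have hx : x ∈ (⊥ : Subalgebra K L) := hbot ▸ Algebra.mem_top
      obtain ⟨y, hy⟩ := Algebra.mem_bot.mp hx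
      exact hy ▸ IsSolvableByRad.base y
    · haveI := hsolv
      have hmpos : 0 < m := hm ▸ Module.finrank_pos
      have hm2 : 1 < m := lt_of_le_of_ne hmpos (fun h => hm1 h.symm)
      have hcard : Fintype.card (L ≃ₐ[K] L) = m := by
        rw [← Nat.card_eq_fintype_card, IsGalois.card_aut_eq_finrank, hm]
      haveI : Nontrivial (L ≃ₐ[K] L) :=
        Fintype.one_lt_card_iff_nontrivial.mp (hcard ▸ hm2)
      obtain ⟨N, hNnormal, hNne, hNcyc⟩ := exists_normal_cyclic_quotient (L ≃ₐ[K] L)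
      haveI := hNnormal
      haveI := hNcyc
      set M := IntermediateField.fixedField N with hM
      classical
      have hdL : Module.finrank (↥M) L = Nat.card N := by
        rw [IntermediateField.finrank_fixedField_eq_card, Nat.card_eq_fintype_card]
      have htower : Module.finrank K ↥M * Module.finrank ↥M L = m := by
        rw [← hm]; exact Module.finrank_mul_finrank K ↥M L
      have hdM_dvd : Module.finrank K ↥M ∣ n :=
        dvd_trans ⟨Module.finrank ↥M L, htower.symm⟩ hdvd
      -- Kummer step on M
      haveI : IsCyclic (↥M ≃ₐ[K] ↥M) :=
        isCyclic_of_surjective _ (IsGalois.normalAutEquivQuotient N).surjective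
      have hprim : (primitiveRoots (Module.finrank K ↥M) K).Nonempty := by
        refine ⟨ζ ^ (n / Module.finrank K ↥M), ?_⟩
        rw [mem_primitiveRoots Module.finrank_pos]
        exact hζ.pow hn.bot_lt (Nat.div_mul_cancel hdM_dvd).symm
      obtain ⟨α, hα1, hα2⟩ := exists_root_adjoin_eq_top_of_isCyclic K ↥M hprim
      have hMrad : ∀ y : ↥M, IsSolvableByRad K y := by
        intro y
        have hy : y ∈ IntermediateField.adjoin K {α} := by
          rw [hα2]; exact IntermediateField.mem_top
        have hαrad : α ∈ solvableByRad K ↥M := by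
          refine IsSolvableByRad.mem_solvableByRad ?_
          obtain ⟨a, ha⟩ := hα1
          exact IsSolvableByRad.rad α (Module.finrank K ↥M) Module.finrank_pos.ne'
            (ha ▸ IsSolvableByRad.base a)
        have hle : IntermediateField.adjoin K {α} ≤ solvableByRad K ↥M :=
          IntermediateField.adjoin_simple_le_iff.mpr hαrad
        exact IsSolvableByRad.of_mem (hle hy)
      -- recursion on L over M
      haveI : FiniteDimensional ↥M L := FiniteDimensional.right K ↥M L
      haveI : IsGalois ↥M L := IsGalois.tower_top_intermediateField M
      have hsolv' : Group.IsSolvable (L ≃ₐ[↥M] L) := by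
        have e : ↥(IntermediateField.fixingSubgroup M) ≃* (L ≃ₐ[↥M] L) :=
          IntermediateField.fixingSubgroupEquiv M
        have hfix : IntermediateField.fixingSubgroup M = N :=
          IntermediateField.fixingSubgroup_fixedField N
        haveI : Group.IsSolvable ↥(IntermediateField.fixingSubgroup M) := by
          rw [hfix]; infer_instance
        exact solvable_of_surjective (f := e.toMonoidHom) e.surjective
      have hcardN_lt : Nat.card ↥N < m := by
        refine lt_of_le_of_ne (Nat.le_of_dvd hmpos ?_) ?_
        · have := Subgroup.card_subgroup_dvd_card N
          rwa [Nat.card_eq_fintype_card (α := L ≃ₐ[K] L), hcard] at this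
        · intro h
          refine hNne (Subgroup.eq_top_of_card_eq N ?_)
          rw [h, Nat.card_eq_fintype_card (α := L ≃ₐ[K] L), hcard]
      have hLrad : ∀ z : L, IsSolvableByRad ↥M z := by
        refine ih (Module.finrank ↥M L) (hdL ▸ hcardN_lt) ↥M L inferInstance inferInstance inferInstance inferInstance inferInstance hsolv' rfl ?_ ?_
        · exact dvd_trans ⟨Module.finrank K ↥M, by rw [mul_comm]; exact htower.symm⟩ hdvd
        · exact ⟨algebraMap K ↥M ζ, hζ.map_of_injective (algebraMap K ↥M).injective⟩
      refine IsSolvableByRad.trans_tower (M := ↥M) ?_ (hLrad x)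
      intro y
      exact (hMrad y).map_algHom M.val

end Engine
section Main

variable {F : Type*} [Field F] [CharZero F]

theorem radical_to_solvable_gal (p : Polynomial F) (hp : p ≠ 0)
    (hrad : ∀ x : AlgebraicClosure F, Polynomial.aeval x p = 0 → IsSolvableByRad F x) :
    IsSolvable p.Gal := by
  classical
  set s := UniqueFactorizationMonoid.factors p with hs
  have hprod : Associated s.prod p := UniqueFactorizationMonoid.factors_prod hp
  have hsolvprod : IsSolvable s.prod.Gal := by
    apply gal_prod_isSolvable
    intro r hr
    have hirr : Irreducible r := UniqueFactorizationMonoid.irreducible_of_factor r hr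
    have hdvd : r ∣ p := UniqueFactorizationMonoid.dvd_of_mem_factors hr
    have hdeg : r.degree ≠ 0 :=
      (Polynomial.natDegree_pos_iff_degree_pos.mp hirr.natDegree_pos).ne'
    obtain ⟨x, hxr⟩ := IsAlgClosed.exists_aeval_eq_zero (AlgebraicClosure F) r hdeg
    have hxp : Polynomial.aeval x p = 0 := by
      obtain ⟨t, rfl⟩ := hdvd
      rw [map_mul, hxr, zero_mul]
    exact isSolvable_gal_of_irreducible (hrad x hxp).mem_solvableByRad hirr hxr
  obtain ⟨u, hu⟩ := hprod
  haveI hfact : Fact ((p.map (algebraMap F s.prod.SplittingField)).Splits) := by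
    constructor
    rw [← hu]
    obtain ⟨c, _, hc2⟩ := Polynomial.isUnit_iff.mp u.isUnit
    rw [← hc2, Polynomial.map_mul, Polynomial.map_C]
    exact (Polynomial.SplittingField.splits s.prod).mul
      (Polynomial.Splits.C _)
  exact gal_isSolvable_of_splits hfact hsolvprod

set_option maxHeartbeats 2000000 in
theorem solvable_gal_to_radical (p : Polynomial F) (hp : p ≠ 0)
    (hgal : IsSolvable p.Gal) (x : AlgebraicClosure F) (hx : Polynomial.aeval x p = 0) :
    IsSolvableByRad F x := by
  classical
  set n := Module.finrank F p.SplittingField with hn_def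
  have hn : n ≠ 0 := Module.finrank_pos.ne'
  haveI : NeZero n := ⟨hn⟩
  -- a primitive n-th root of unity in Ω
  have hdeg : (Polynomial.cyclotomic n (AlgebraicClosure F)).degree ≠ 0 := by
    rw [Polynomial.degree_cyclotomic]
    exact_mod_cast (Nat.totient_pos.mpr (Nat.pos_of_ne_zero hn)).ne'
  obtain ⟨ζ, hζroot⟩ := IsAlgClosed.exists_root _ hdeg
  have hζ : IsPrimitiveRoot ζ n := Polynomial.isRoot_cyclotomic_iff.mp hζroot
  set K := F⟮ζ⟯ with hK
  have hζrad : IsSolvableByRad F ζ := by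
    refine IsSolvableByRad.rad ζ n hn ?_
    rw [hζ.pow_eq_one, ← map_one (algebraMap F (AlgebraicClosure F))]
    exact IsSolvableByRad.base 1
  have hKrad : ∀ y : ↥K, IsSolvableByRad F (algebraMap ↥K (AlgebraicClosure F) y) := fun y =>
    IsSolvableByRad.of_mem ((adjoin_simple_le_iff.mpr (show ζ ∈ solvableByRad F (AlgebraicClosure F) from hζrad.mem_solvableByRad)) y.2)
  -- the splitting field of p over K inside Ω
  set q := p.map (algebraMap F ↥K) with hq
  have hq0 : q ≠ 0 := Polynomial.map_ne_zero hp
  have hroots : q.rootSet (AlgebraicClosure F) = p.rootSet (AlgebraicClosure F) := by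
    ext z
    rw [Polynomial.mem_rootSet, Polynomial.mem_rootSet, Polynomial.aeval_map_algebraMap]
    exact and_congr_left fun _ => ⟨fun _ => hp, fun _ => hq0⟩
  set L := IntermediateField.adjoin ↥K (p.rootSet (AlgebraicClosure F)) with hL
  haveI hLsplit : Polynomial.IsSplittingField ↥K ↥L q := by
    have h2 := IntermediateField.adjoin_rootSet_isSplittingField
      (IsAlgClosed.splits (q.map (algebraMap ↥K (AlgebraicClosure F))))
    rwa [hroots] at h2
  haveI : FiniteDimensional ↥K ↥L := Polynomial.IsSplittingField.finiteDimensional ↥L q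
  haveI : Normal ↥K ↥L := Normal.of_isSplittingField q
  haveI : IsGalois ↥K ↥L := { to_isSeparable := inferInstance, to_normal := inferInstance }
  -- roots of p inside L
  have hrootsL : q.rootSet ↥L = p.rootSet ↥L := by
    ext z
    rw [Polynomial.mem_rootSet, Polynomial.mem_rootSet, Polynomial.aeval_map_algebraMap]
    exact and_congr_left fun _ => ⟨fun _ => hp, fun _ => hq0⟩
  have hsplitsL : (p.map (algebraMap F ↥L)).Splits := by
    rw [IsScalarTower.algebraMap_eq F ↥K ↥L, ← Polynomial.map_map]
    exact Polynomial.IsSplittingField.splits ↥L q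
  set E₁ := IntermediateField.adjoin F (p.rootSet ↥L) with hE₁
  haveI hE₁split : Polynomial.IsSplittingField F ↥E₁ p :=
    IntermediateField.adjoin_rootSet_isSplittingField hsplitsL
  haveI : FiniteDimensional F ↥E₁ := Polynomial.IsSplittingField.finiteDimensional ↥E₁ p
  haveI : Normal F ↥E₁ := Normal.of_isSplittingField p
  haveI : IsGalois F ↥E₁ := { to_isSeparable := inferInstance, to_normal := inferInstance }
  have gsolv : Group.IsSolvable (↥E₁ ≃ₐ[F] ↥E₁) := by
    haveI : Group.IsSolvable (p.SplittingField ≃ₐ[F] p.SplittingField) := hgal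
    have e := Polynomial.IsSplittingField.algEquiv ↥E₁ p
    exact solvable_of_surjective (f := (AlgEquiv.autCongr e).symm.toMonoidHom)
      (AlgEquiv.autCongr e).symm.surjective
  -- restriction homomorphism
  let res : (↥L ≃ₐ[↥K] ↥L) →* (↥L ≃ₐ[F] ↥L) :=
    { toFun := fun σ => σ.restrictScalars F
      map_one' := rfl
      map_mul' := fun _ _ => rfl }
  let h : (↥L ≃ₐ[↥K] ↥L) →* (↥E₁ ≃ₐ[F] ↥E₁) := (AlgEquiv.restrictNormalHom ↥E₁).comp res
  have hadjtop : IntermediateField.adjoin ↥K (p.rootSet ↥L) = ⊤ := by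
    rw [← hrootsL]
    refine eq_top_iff.mpr ?_
    intro w _
    have hw : w ∈ Algebra.adjoin ↥K (q.rootSet ↥L) :=
      (Polynomial.IsSplittingField.adjoin_rootSet ↥L q) ▸ Algebra.mem_top
    exact IntermediateField.algebra_adjoin_le_adjoin ↥K _ hw
  have hinj : Function.Injective h := by
    refine (injective_iff_map_eq_one h).mpr ?_
    intro σ hσ
    have hres : (σ.restrictScalars F).restrictNormal ↥E₁ = 1 := hσ
    have hfix : ∀ z ∈ p.rootSet ↥L, σ z = z := by
      intro z hz
      have hzE : z ∈ E₁ := IntermediateField.subset_adjoin F _ hz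
      have hcomm := AlgEquiv.restrictNormal_commutes (σ.restrictScalars F) ↥E₁ ⟨z, hzE⟩
      rw [hres] at hcomm
      exact hcomm.symm
    refine AlgEquiv.ext fun w => ?_
    have hw : w ∈ IntermediateField.adjoin ↥K (p.rootSet ↥L) := by
      rw [hadjtop]; exact IntermediateField.mem_top
    show σ w = (1 : ↥L ≃ₐ[↥K] ↥L) w
    rw [AlgEquiv.one_apply]
    exact IntermediateField.adjoin_induction ↥K (fun z hz => hfix z hz)
      (fun r => σ.commutes r)
      (fun a b _ _ ha hb => by rw [map_add, ha, hb])
      (fun a _ ha => by rw [map_inv₀, ha])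
      (fun a b _ _ ha hb => by rw [map_mul, ha, hb]) hw
  have hsolvL : Group.IsSolvable (↥L ≃ₐ[↥K] ↥L) := by
    haveI := gsolv
    exact solvable_of_solvable_injective hinj
  have hmdvd : Module.finrank ↥K ↥L ∣ n := by
    have h1 : Nat.card (↥L ≃ₐ[↥K] ↥L) = Module.finrank ↥K ↥L := by
      rw [IsGalois.card_aut_eq_finrank]
    have h2 : Nat.card (↥E₁ ≃ₐ[F] ↥E₁) = n := by
      rw [IsGalois.card_aut_eq_finrank]
      exact (Polynomial.IsSplittingField.algEquiv ↥E₁ p).toLinearEquiv.finrank_eq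
    rw [← h1, ← h2]
    calc Nat.card (↥L ≃ₐ[↥K] ↥L) = Nat.card ↥h.range :=
          Nat.card_congr (MonoidHom.ofInjective hinj).toEquiv
      _ ∣ Nat.card (↥E₁ ≃ₐ[F] ↥E₁) := Subgroup.card_subgroup_dvd_card _
  -- the primitive root inside K
  have hζmem : ζ ∈ K := IntermediateField.mem_adjoin_simple_self F ζ
  have hζK : IsPrimitiveRoot (⟨ζ, hζmem⟩ : ↥K) n := by
    constructor
    · exact Subtype.ext (by rw [SubmonoidClass.coe_pow]; exact hζ.pow_eq_one)
    · intro l hl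
      apply hζ.dvd_of_pow_eq_one
      have := congrArg Subtype.val hl
      rwa [SubmonoidClass.coe_pow] at this
  -- apply the engine
  have hxL : x ∈ L :=
    IntermediateField.subset_adjoin ↥K _ (Polynomial.mem_rootSet.mpr ⟨hp, hx⟩)
  have hx' : IsSolvableByRad ↥K (⟨x, hxL⟩ : ↥L) :=
    solvable_gal_radical_engine n hn (Module.finrank ↥K ↥L) ↥K ↥L inferInstance inferInstance
      inferInstance inferInstance inferInstance hsolvL rfl hmdvd ⟨_, hζK⟩ _
  have hxK : IsSolvableByRad ↥K x := hx'.map_algHom L.val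
  exact IsSolvableByRad.trans_tower hKrad hxK

end Main

theorem galois_solvability_criterion (F : Type*) [Field F] [CharZero F]
    (p : Polynomial F) (hp : p ≠ 0) :
    (∀ x : AlgebraicClosure F, Polynomial.aeval x p = 0 → IsSolvableByRad F x) ↔
      IsSolvable p.Gal := by
  constructor
  · exact radical_to_solvable_gal p hp
  · intro hgal x hx
    exact solvable_gal_to_radical p hp hgal x hx
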